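/- Serre's characterization of free groups: a group G is free if and only if G acts freely and without edge inversion on a tree. In particular, every subgroup of a free group is free. -/

import Mathlib

namespace SerreAux

/-- cancellation-freeness of adjacent letters -/
def Cancel {α : Type*} (a b : α × Bool) : Prop := a.1 = b.1 ∧ a.2 = !b.2

lemma reduce_chain' {α : Type*} [DecidableEq α] (L : List (α × Bool))
    (h : List.Chain' (fun a b => ¬ Cancel a b) L) : FreeGroup.reduce L = L := by
  induction L with
  | nil => rfl
  | cons x L ih =>
    rw [FreeGroup.reduce.cons, ih h.tail]
    cases L with
    | nil => rfl
    | cons y T =>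
      show (if x.1 = y.1 ∧ x.2 = !y.2 then T else x :: y :: T) = x :: y :: T
      exact if_neg (List.isChain_cons_cons.mp h).1

lemma mk_cons_ne_one {α : Type*} (x : α × Bool) (L : List (α × Bool))
    (h : List.Chain' (fun a b => ¬ Cancel a b) (x :: L)) : FreeGroup.mk (x :: L) ≠ 1 := by
  classical
  intro h1
  have h2 := congrArg FreeGroup.toWord h1
  rw [FreeGroup.toWord_mk, FreeGroup.toWord_one, reduce_chain' _ h] at h2
  exact List.cons_ne_nil _ _ h2

lemma mk_single_inj {α : Type*} {p q : α × Bool} (h : FreeGroup.mk [p] = FreeGroup.mk [q]) :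
    p = q := by
  classical
  have h2 := congrArg FreeGroup.toWord h
  rw [FreeGroup.toWord_mk, FreeGroup.toWord_mk, FreeGroup.reduce_singleton,
    FreeGroup.reduce_singleton] at h2
  exact List.head_eq_of_cons_eq h2

lemma inv_single {α : Type*} (x : α) (b : Bool) :
    (FreeGroup.mk [(x, b)])⁻¹ = FreeGroup.mk [(x, !b)] := by
  rw [FreeGroup.inv_mk]; rfl

lemma mk_single_ne_one {α : Type*} (p : α × Bool) : FreeGroup.mk [p] ≠ 1 :=
  mk_cons_ne_one p [] (List.isChain_singleton _)

lemma chain'_and {α : Type*} {R S : α → α → Prop} :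
    ∀ (l : List α), List.Chain' R l → List.Chain' S l →
      List.Chain' (fun a b => R a b ∧ S a b) l
  | [], _, _ => List.isChain_nil
  | [_], _, _ => List.isChain_singleton _
  | a :: b :: l, hR, hS => by
    simp only [List.Chain', List.isChain_cons_cons] at *
    exact ⟨⟨hR.1, hS.1⟩, chain'_and _ hR.2 hS.2⟩

variable {V : Type*} {Γ : SimpleGraph V}

lemma trail_chain {α : Type*} (ℓ : Γ.Dart → α × Bool)
    (hcancel : ∀ d d' : Γ.Dart, d.snd = d'.fst → Cancel (ℓ d) (ℓ d') → d'.snd = d.fst)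
    {u v : V} (w : Γ.Walk u v) (hw : w.IsTrail) :
    List.Chain' (fun a b => ¬ Cancel a b) (w.darts.map ℓ) := by
  have h1 : List.Chain' Γ.DartAdj w.darts := w.isChain_dartAdj_darts
  have h2 : List.Chain' (fun d d' : Γ.Dart => d.edge ≠ d'.edge) w.darts := by
    have := hw.edges_nodup
    rw [SimpleGraph.Walk.edges] at this
    exact (List.isChain_map _).mp this.isChain
  refine List.isChain_map_of_isChain ℓ ?_ (chain'_and _ h1 h2)
  rintro d d' ⟨hAdj, hEdge⟩ hc
  apply hEdge
  have hback : d'.snd = d.fst := hcancel d d' hAdj hc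
  have hAdj' : d.snd = d'.fst := hAdj
  have : d'.toProd = d.toProd.swap := by
    ext
    · exact hAdj'.symm
    · exact hback
  rw [SimpleGraph.Dart.edge, SimpleGraph.Dart.edge, this, Sym2.mk_prod_swap_eq]
  rfl

end SerreAux

namespace SerreAux

section Forward

variable (ι : Type)

/-- Cayley graph of the free group. -/
def cayley : SimpleGraph (FreeGroup ι) where
  Adj u v := ∃ p : ι × Bool, v = u * FreeGroup.mk [p]
  symm := by
    constructor
    rintro u v ⟨⟨x, b⟩, rfl⟩
    refine ⟨(x, !b), ?_⟩
    rw [mul_assoc, ← inv_single, mul_inv_cancel, mul_one]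
  loopless := by
    constructor
    rintro u ⟨p, hp⟩
    exact mk_single_ne_one p (left_eq_mul.mp hp)

noncomputable def letter (d : (cayley ι).Dart) : ι × Bool := d.adj.choose

lemma letter_spec (d : (cayley ι).Dart) : d.snd = d.fst * FreeGroup.mk [letter ι d] :=
  d.adj.choose_spec

lemma letter_unique (d : (cayley ι).Dart) (p : ι × Bool)
    (hp : d.snd = d.fst * FreeGroup.mk [p]) : letter ι d = p := by
  have h := (letter_spec ι d).symm.trans hp
  exact mk_single_inj (mul_left_cancel h)

lemma val_walk : ∀ {u v : FreeGroup ι} (w : (cayley ι).Walk u v),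
    v = u * FreeGroup.mk (w.darts.map (letter ι))
  | u, _, SimpleGraph.Walk.nil => by
    rw [SimpleGraph.Walk.darts_nil, List.map_nil, ← FreeGroup.one_eq_mk, mul_one]
  | u, v, SimpleGraph.Walk.cons (v := x) h w => by
    have hs : x = u * FreeGroup.mk [letter ι ⟨(u, x), h⟩] := letter_spec ι ⟨(u, x), h⟩
    rw [SimpleGraph.Walk.darts_cons, List.map_cons, ← List.singleton_append,
      ← FreeGroup.mul_mk, ← mul_assoc, ← hs]
    exact val_walk w

lemma cayley_reachable (L : List (ι × Bool)) :
    ∀ (u : FreeGroup ι), (cayley ι).Reachable u (u * FreeGroup.mk L) := by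
  induction L with
  | nil => intro u; rw [← FreeGroup.one_eq_mk, mul_one]
  | cons p L ih =>
    intro u
    have h1 : (cayley ι).Adj u (u * FreeGroup.mk [p]) := ⟨p, rfl⟩
    have h2 := ih (u * FreeGroup.mk [p])
    rw [mul_assoc, FreeGroup.mul_mk] at h2
    exact h1.reachable.trans h2

lemma cayley_connected : (cayley ι).Connected := by
  classical
  constructor
  · intro u v
    have := cayley_reachable ι (u⁻¹ * v).toWord u
    rwa [FreeGroup.mk_toWord, mul_inv_cancel_left] at this

lemma cayley_cancel (d d' : (cayley ι).Dart) (hAdj : d.snd = d'.fst)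
    (hc : Cancel (letter ι d) (letter ι d')) : d'.snd = d.fst := by
  have hd := letter_spec ι d
  have hd' := letter_spec ι d'
  rcases e : letter ι d with ⟨x, b⟩
  rcases e' : letter ι d' with ⟨x', b'⟩
  rw [e, e'] at hc
  obtain ⟨h1, h2⟩ := hc
  dsimp at h1 h2
  subst h1
  rw [e, h2] at hd
  have key : FreeGroup.mk [(x, !b')] * FreeGroup.mk [(x, b')] = 1 := by
    rw [← inv_single x b', inv_mul_cancel]
  rw [e', ← hAdj, hd, mul_assoc, key, mul_one] at hd'
  exact hd'

lemma cayley_acyclic : (cayley ι).IsAcyclic := by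
  intro v c hc
  have h1 := val_walk ι c
  cases hd : c.darts with
  | nil =>
    cases c with
    | nil => exact SimpleGraph.Walk.IsCycle.not_of_nil hc
    | cons h w => simp [SimpleGraph.Walk.darts_cons] at hd
  | cons x L =>
    have hch := trail_chain (letter ι) (cayley_cancel ι) c hc.isTrail
    rw [hd] at h1 hch
    rw [List.map_cons] at h1 hch
    exact mk_cons_ne_one _ _ hch (left_eq_mul.mp h1)

lemma cayley_isTree : (cayley ι).IsTree := ⟨cayley_connected ι, cayley_acyclic ι⟩

end Forward

end SerreAux

namespace SerreAux

lemma serre_forward {G : Type} [Group G] {ι : Type} (e : G ≃* FreeGroup ι) :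
    ∃ (V : Type) (Γ : SimpleGraph V) (_ : MulAction G V),
      Γ.IsTree ∧
      (∀ (g : G) (u v : V), Γ.Adj u v → Γ.Adj (g • u) (g • v)) ∧
      (∀ (g : G) (v : V), g • v = v → g = 1) ∧
      (∀ (g : G) (u v : V), Γ.Adj u v → ¬(g • u = v ∧ g • v = u)) := by
  classical
  letI : SMul G (FreeGroup ι) := ⟨fun g v => e g * v⟩
  have smul_def : ∀ (g : G) (v : FreeGroup ι), g • v = e g * v := fun _ _ => rfl
  letI act : MulAction G (FreeGroup ι) :=
    { one_smul := fun v => by rw [smul_def, map_one, one_mul]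
      mul_smul := fun g h v => by rw [smul_def, smul_def, smul_def, map_mul, mul_assoc] }
  refine ⟨FreeGroup ι, cayley ι, act, cayley_isTree ι, ?_, ?_, ?_⟩
  · rintro g u v ⟨p, rfl⟩
    rw [smul_def, smul_def]
    exact ⟨p, (mul_assoc _ _ _).symm⟩
  · intro g v h
    rw [smul_def] at h
    have h1 : e g = e 1 := by
      rw [map_one]
      exact mul_right_cancel (h.trans (one_mul v).symm)
    exact e.injective h1
  · rintro g u v ⟨p, rfl⟩ ⟨h1, h2⟩
    rw [smul_def] at h1 h2
    rw [← mul_assoc, h1, mul_assoc] at h2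
    have h3 : FreeGroup.mk [p] * FreeGroup.mk [p] = 1 := left_eq_mul.mp h2.symm
    rw [FreeGroup.mul_mk] at h3
    exact mk_cons_ne_one p [p]
      (List.isChain_pair.mpr (fun hc => by simpa using hc.2)) h3

end SerreAux

namespace SerreAux

section Backward

variable (G : Type) [Group G] {V : Type} [MulAction G V] (Γ : SimpleGraph V)

def dSetoid : Setoid Γ.Dart where
  r d d' := ∃ g : G, g • d.fst = d'.fst ∧ g • d.snd = d'.snd
  iseqv := by
    constructor
    · exact fun d => ⟨1, one_smul _ _, one_smul _ _⟩
    · rintro d d' ⟨g, h1, h2⟩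
      exact ⟨g⁻¹, by rw [← h1, inv_smul_smul], by rw [← h2, inv_smul_smul]⟩
    · rintro d d' d'' ⟨g, h1, h2⟩ ⟨g', h1', h2'⟩
      exact ⟨g' * g, by rw [mul_smul, h1, h1'], by rw [mul_smul, h2, h2']⟩

def DBar := Quotient (dSetoid G Γ)

def dmk (d : Γ.Dart) : DBar G Γ := Quotient.mk (dSetoid G Γ) d

lemma dmk_eq_iff {d d' : Γ.Dart} :
    dmk G Γ d = dmk G Γ d' ↔ ∃ g : G, g • d.fst = d'.fst ∧ g • d.snd = d'.snd :=
  ⟨fun h => Quotient.exact h, fun h => Quotient.sound (s := dSetoid G Γ) h⟩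

def sigma : DBar G Γ → DBar G Γ :=
  Quotient.map SimpleGraph.Dart.symm (by
    rintro ⟨⟨a, b⟩, hab⟩ ⟨⟨a', b'⟩, hab'⟩ ⟨g, h1, h2⟩
    exact ⟨g, h2, h1⟩)

lemma sigma_dmk (d : Γ.Dart) : sigma G Γ (dmk G Γ d) = dmk G Γ d.symm := rfl

lemma sigma_sigma (o : DBar G Γ) : sigma G Γ (sigma G Γ o) = o := by
  induction o using Quotient.ind with
  | _ d =>
    show dmk G Γ d.symm.symm = dmk G Γ d
    rw [SimpleGraph.Dart.symm_symm]

lemma sigma_ne (hinv : ∀ (g : G) (u v : V), Γ.Adj u v → ¬(g • u = v ∧ g • v = u))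
    (o : DBar G Γ) : sigma G Γ o ≠ o := by
  induction o using Quotient.ind with
  | _ d =>
    intro h
    have h' : dmk G Γ d.symm = dmk G Γ d := h
    rw [dmk_eq_iff] at h'
    obtain ⟨g, h1, h2⟩ := h'
    exact hinv g d.fst d.snd d.adj ⟨h2, h1⟩

def pSetoid : Setoid (DBar G Γ) where
  r o o' := o' = o ∨ o' = sigma G Γ o
  iseqv := by
    constructor
    · exact fun o => Or.inl rfl
    · rintro o o' (rfl | rfl)
      · exact Or.inl rfl
      · exact Or.inr (sigma_sigma G Γ o).symm
    · rintro o o' o'' (rfl | rfl) (rfl | rfl)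
      · exact Or.inl rfl
      · exact Or.inr rfl
      · exact Or.inr rfl
      · exact Or.inl (sigma_sigma G Γ o)

noncomputable def rep (o : DBar G Γ) : DBar G Γ := (Quotient.mk (pSetoid G Γ) o).out

lemma rep_spec (o : DBar G Γ) : rep G Γ o = o ∨ rep G Γ o = sigma G Γ o := by
  rcases (Quotient.mk_out (s := pSetoid G Γ) o : _) with h | h
  · exact Or.inl h.symm
  · have h2 := congrArg (sigma G Γ) h
    rw [sigma_sigma] at h2
    exact Or.inr h2.symm

lemma rep_sigma (o : DBar G Γ) : rep G Γ (sigma G Γ o) = rep G Γ o := by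
  unfold rep
  congr 1
  exact (Quotient.sound (s := pSetoid G Γ) (Or.inr rfl)).symm

def Pset : Set (DBar G Γ) := {o | rep G Γ o = o}

lemma sigma_mem_Pset {o : DBar G Γ} (h : o ∉ Pset G Γ) : sigma G Γ o ∈ Pset G Γ := by
  rcases rep_spec G Γ o with h1 | h1
  · exact absurd h1 h
  · show rep G Γ _ = _
    rw [rep_sigma, h1]

lemma not_sigma_mem_Pset (hinv : ∀ (g : G) (u v : V), Γ.Adj u v → ¬(g • u = v ∧ g • v = u))
    {o : DBar G Γ} (h : o ∈ Pset G Γ) : sigma G Γ o ∉ Pset G Γ := by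
  intro h2
  have h3 : rep G Γ (sigma G Γ o) = sigma G Γ o := h2
  rw [rep_sigma, h] at h3
  exact sigma_ne G Γ hinv o h3.symm

noncomputable def genW' (o : DBar G Γ) : ↥(Pset G Γ) × Bool := by
  classical
  exact if h : o ∈ Pset G Γ then (⟨o, h⟩, true)
  else (⟨sigma G Γ o, sigma_mem_Pset G Γ h⟩, false)

noncomputable def genW (d : Γ.Dart) : ↥(Pset G Γ) × Bool := genW' G Γ (dmk G Γ d)

lemma genW_eq_of {d d' : Γ.Dart} (h : dmk G Γ d = dmk G Γ d') :
    genW G Γ d = genW G Γ d' := congrArg (genW' G Γ) h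

lemma genW'_sigma (hinv : ∀ (g : G) (u v : V), Γ.Adj u v → ¬(g • u = v ∧ g • v = u))
    (o : DBar G Γ) :
    genW' G Γ (sigma G Γ o) = ((genW' G Γ o).1, !(genW' G Γ o).2) := by
  unfold genW'
  by_cases h : o ∈ Pset G Γ
  · rw [dif_pos h, dif_neg (not_sigma_mem_Pset G Γ hinv h)]
    refine Prod.ext (Subtype.ext ?_) rfl
    exact sigma_sigma G Γ o
  · rw [dif_neg h, dif_pos (sigma_mem_Pset G Γ h)]
    rfl

lemma genW'_inj {o o' : DBar G Γ} (h : genW' G Γ o = genW' G Γ o') : o = o' := by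
  unfold genW' at h
  by_cases h1 : o ∈ Pset G Γ <;> by_cases h2 : o' ∈ Pset G Γ
  · rw [dif_pos h1, dif_pos h2] at h
    exact congrArg Subtype.val (congrArg Prod.fst h)
  · rw [dif_pos h1, dif_neg h2] at h
    exact absurd (congrArg Prod.snd h) (by simp)
  · rw [dif_neg h1, dif_pos h2] at h
    exact absurd (congrArg Prod.snd h) (by simp)
  · rw [dif_neg h1, dif_neg h2] at h
    have h3 : sigma G Γ o = sigma G Γ o' :=
      congrArg Subtype.val (congrArg Prod.fst h)
    have h4 := congrArg (sigma G Γ) h3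
    rwa [sigma_sigma, sigma_sigma] at h4

lemma genW_symm (hinv : ∀ (g : G) (u v : V), Γ.Adj u v → ¬(g • u = v ∧ g • v = u))
    (d : Γ.Dart) : genW G Γ d.symm = ((genW G Γ d).1, !(genW G Γ d).2) := by
  unfold genW
  rw [← sigma_dmk, genW'_sigma G Γ hinv]

lemma genW_inj {d d' : Γ.Dart} (h : genW G Γ d = genW G Γ d') :
    dmk G Γ d = dmk G Γ d' := genW'_inj G Γ h

lemma backward_cancel
    (hinv : ∀ (g : G) (u v : V), Γ.Adj u v → ¬(g • u = v ∧ g • v = u))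
    (hfree : ∀ (g : G) (v : V), g • v = v → g = 1)
    (d d' : Γ.Dart) (hAdj : d.snd = d'.fst)
    (hc : Cancel (genW G Γ d) (genW G Γ d')) : d'.snd = d.fst := by
  obtain ⟨h1, h2⟩ := hc
  have key : genW G Γ d' = genW G Γ d.symm := by
    rw [genW_symm G Γ hinv d]
    refine Prod.ext h1.symm ?_
    rw [h2, Bool.not_not]
  have h3 := genW_inj G Γ key
  rw [dmk_eq_iff] at h3
  obtain ⟨g, hg1, hg2⟩ := h3
  have hg1' : g • d'.fst = d'.fst := by
    have hsf : d.symm.fst = d'.fst := hAdj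
    rwa [hsf] at hg1
  have hone : g = 1 := hfree g _ hg1'
  rw [hone, one_smul] at hg2
  have hss : d.symm.snd = d.fst := rfl
  rw [hss] at hg2
  exact hg2

end Backward

end SerreAux

namespace SerreAux

section Backward2

variable (G : Type) [Group G] {V : Type} [MulAction G V] (Γ : SimpleGraph V)

noncomputable def wval {u v : V} (w : Γ.Walk u v) : FreeGroup ↥(Pset G Γ) :=
  FreeGroup.mk (w.darts.map (genW G Γ))

lemma wval_nil (u : V) : wval G Γ (SimpleGraph.Walk.nil : Γ.Walk u u) = 1 := by
  unfold wval
  rw [SimpleGraph.Walk.darts_nil, List.map_nil, ← FreeGroup.one_eq_mk]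

lemma wval_cons {u x v : V} (h : Γ.Adj u x) (w : Γ.Walk x v) :
    wval G Γ (SimpleGraph.Walk.cons h w) =
      FreeGroup.mk [genW G Γ ⟨(u, x), h⟩] * wval G Γ w := by
  unfold wval
  rw [SimpleGraph.Walk.darts_cons, List.map_cons, FreeGroup.mul_mk]
  rfl

lemma wval_append {u x v : V} (p : Γ.Walk u x) (q : Γ.Walk x v) :
    wval G Γ (p.append q) = wval G Γ p * wval G Γ q := by
  unfold wval
  rw [SimpleGraph.Walk.darts_append, List.map_append, FreeGroup.mul_mk]

lemma wval_concat {u v x : V} (p : Γ.Walk u v) (h : Γ.Adj v x) :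
    wval G Γ (p.concat h) = wval G Γ p * FreeGroup.mk [genW G Γ ⟨(v, x), h⟩] := by
  rw [SimpleGraph.Walk.concat_eq_append, wval_append, wval_cons, wval_nil, mul_one]

variable (hT : Γ.IsTree) (v₀ : V)

noncomputable def pthw (v : V) : Γ.Walk v₀ v := (hT.existsUnique_path v₀ v).choose

lemma pthw_isPath (v : V) : (pthw Γ hT v₀ v).IsPath :=
  (hT.existsUnique_path v₀ v).choose_spec.1

lemma pthw_unique {v : V} (w : Γ.Walk v₀ v) (hw : w.IsPath) : w = pthw Γ hT v₀ v :=
  (hT.existsUnique_path v₀ v).choose_spec.2 w hw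

noncomputable def fv (v : V) : FreeGroup ↥(Pset G Γ) := wval G Γ (pthw Γ hT v₀ v)

lemma fv_base : fv G Γ hT v₀ v₀ = 1 := by
  unfold fv
  rw [← pthw_unique Γ hT v₀ SimpleGraph.Walk.nil SimpleGraph.Walk.IsPath.nil, wval_nil]

lemma fv_adj (hinv : ∀ (g : G) (u v : V), Γ.Adj u v → ¬(g • u = v ∧ g • v = u))
    {u x : V} (h : Γ.Adj u x) :
    fv G Γ hT v₀ x = fv G Γ hT v₀ u * FreeGroup.mk [genW G Γ ⟨(u, x), h⟩] := by
  classical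
  by_cases hx : x ∈ (pthw Γ hT v₀ u).support
  · set p := pthw Γ hT v₀ u with hp
    have hq : (p.takeUntil x hx).IsPath := (pthw_isPath Γ hT v₀ u).takeUntil hx
    have hr : (p.dropUntil x hx).IsPath := (pthw_isPath Γ hT v₀ u).dropUntil hx
    have hsingle : (SimpleGraph.Walk.cons h.symm SimpleGraph.Walk.nil : Γ.Walk x u).IsPath := by
      rw [SimpleGraph.Walk.cons_isPath_iff]
      exact ⟨SimpleGraph.Walk.IsPath.nil, by simp [h.ne']⟩
    have hdrop : p.dropUntil x hx = SimpleGraph.Walk.cons h.symm SimpleGraph.Walk.nil :=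
      ExistsUnique.unique (hT.existsUnique_path x u) hr hsingle
    have hspec := p.take_spec hx
    have hqq : p.takeUntil x hx = pthw Γ hT v₀ x := pthw_unique Γ hT v₀ _ hq
    have key : fv G Γ hT v₀ u =
        fv G Γ hT v₀ x * FreeGroup.mk [genW G Γ ⟨(x, u), h.symm⟩] := by
      show wval G Γ p = _
      rw [← hspec, wval_append, hdrop, wval_cons, wval_nil, mul_one, hqq]
      rfl
    rw [key]
    have hds : (⟨(x, u), h.symm⟩ : Γ.Dart) = (⟨(u, x), h⟩ : Γ.Dart).symm := rfl
    rw [hds, genW_symm G Γ hinv]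
    rcases e : genW G Γ ⟨(u, x), h⟩ with ⟨a, b⟩
    rw [mul_assoc, ← inv_single, inv_mul_cancel, mul_one]
  · set p := pthw Γ hT v₀ u with hp
    have hcp : (p.concat h).IsPath := by
      have h1 : (SimpleGraph.Walk.cons h.symm p.reverse).IsPath := by
        rw [SimpleGraph.Walk.cons_isPath_iff]
        exact ⟨(pthw_isPath Γ hT v₀ u).reverse,
          by rwa [SimpleGraph.Walk.support_reverse, List.mem_reverse]⟩
      have h2 := h1.reverse
      rwa [SimpleGraph.Walk.reverse_cons, SimpleGraph.Walk.reverse_reverse,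
        ← SimpleGraph.Walk.concat_eq_append] at h2
    have hcc : p.concat h = pthw Γ hT v₀ x := pthw_unique Γ hT v₀ _ hcp
    show wval G Γ (pthw Γ hT v₀ x) = _
    rw [← hcc, wval_concat]
    rfl

def gHom (hadj : ∀ (g : G) (u v : V), Γ.Adj u v → Γ.Adj (g • u) (g • v)) (g : G) :
    Γ →g Γ := ⟨fun v => g • v, fun {u v} h => hadj g u v h⟩

lemma wval_map (hadj : ∀ (g : G) (u v : V), Γ.Adj u v → Γ.Adj (g • u) (g • v))
    (g : G) {u v : V} (w : Γ.Walk u v) :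
    wval G Γ (w.map (gHom G Γ hadj g)) = wval G Γ w := by
  unfold wval
  rw [SimpleGraph.Walk.darts_map, List.map_map]
  congr 1
  refine List.map_congr_left ?_
  intro d _
  exact (genW_eq_of G Γ (dmk_eq_iff G Γ |>.mpr ⟨g, rfl, rfl⟩)).symm

lemma wval_eq_f (hinv : ∀ (g : G) (u v : V), Γ.Adj u v → ¬(g • u = v ∧ g • v = u)) :
    ∀ {u v : V} (w : Γ.Walk u v),
      wval G Γ w = (fv G Γ hT v₀ u)⁻¹ * fv G Γ hT v₀ v
  | u, _, SimpleGraph.Walk.nil => by rw [wval_nil, inv_mul_cancel]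
  | u, v, SimpleGraph.Walk.cons (v := x) h w => by
    rw [wval_cons, wval_eq_f hinv w, fv_adj G Γ hT v₀ hinv h]
    group

end Backward2

end SerreAux

namespace SerreAux

lemma serre_backward (G : Type) [Group G] (V : Type) (Γ : SimpleGraph V) [MulAction G V]
    (hT : Γ.IsTree)
    (hadj : ∀ (g : G) (u v : V), Γ.Adj u v → Γ.Adj (g • u) (g • v))
    (hfree : ∀ (g : G) (v : V), g • v = v → g = 1)
    (hinv : ∀ (g : G) (u v : V), Γ.Adj u v → ¬(g • u = v ∧ g • v = u)) :
    ∃ ι : Type, Nonempty (G ≃* FreeGroup ι) := by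
  obtain ⟨v₀⟩ : Nonempty V := hT.isConnected.nonempty
  let φ : G →* FreeGroup ↥(Pset G Γ) := MonoidHom.mk' (fun g => fv G Γ hT v₀ (g • v₀)) (by
    intro g h
    have h1 : wval G Γ ((pthw Γ hT v₀ (g • v₀)).append
        ((pthw Γ hT v₀ (h • v₀)).map (gHom G Γ hadj g))) =
        (fv G Γ hT v₀ v₀)⁻¹ * fv G Γ hT v₀ (g • (h • v₀)) := wval_eq_f G Γ hT v₀ hinv _
    erw [fv_base, inv_one, one_mul, wval_append, wval_map] at h1
    show fv G Γ hT v₀ ((g * h) • v₀) = fv G Γ hT v₀ (g • v₀) * fv G Γ hT v₀ (h • v₀)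
    rw [mul_smul]
    exact h1.symm)
  have hker : ∀ g : G, φ g = 1 → g = 1 := by
    intro g hg
    by_contra hne
    have hneq : g • v₀ ≠ v₀ := fun hh => hne (hfree g v₀ hh)
    cases hd : (pthw Γ hT v₀ (g • v₀)).darts with
    | nil =>
      have hlen : (pthw Γ hT v₀ (g • v₀)).length = 0 := by
        rw [← SimpleGraph.Walk.length_darts, hd]
        rfl
      exact hneq (SimpleGraph.Walk.eq_of_length_eq_zero hlen).symm
    | cons d L =>
      have hch := trail_chain (genW G Γ) (backward_cancel G Γ hinv hfree)
        (pthw Γ hT v₀ (g • v₀)) (pthw_isPath Γ hT v₀ _).isTrail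
      rw [hd, List.map_cons] at hch
      have hval : φ g = FreeGroup.mk (genW G Γ d :: L.map (genW G Γ)) := by
        show wval G Γ (pthw Γ hT v₀ (g • v₀)) = _
        unfold wval
        rw [hd, List.map_cons]
      exact mk_cons_ne_one _ _ hch (hval ▸ hg)
  have hinj : Function.Injective φ := (injective_iff_map_eq_one φ).mpr hker
  exact ⟨IsFreeGroup.Generators ↥φ.range,
    ⟨(MonoidHom.ofInjective hinj).trans (IsFreeGroup.toFreeGroup _)⟩⟩

end SerreAux

/-- Serre's characterization: a group is free iff it acts freely and without
edge inversion on a tree; in particular, subgroups of free groups are free. -/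
theorem serre_free_iff_acts_freely_on_tree (G : Type) [Group G] :
    ((∃ ι : Type, Nonempty (G ≃* FreeGroup ι)) ↔
      ∃ (V : Type) (Γ : SimpleGraph V) (_ : MulAction G V),
        Γ.IsTree ∧
        (∀ (g : G) (u v : V), Γ.Adj u v → Γ.Adj (g • u) (g • v)) ∧
        (∀ (g : G) (v : V), g • v = v → g = 1) ∧
        (∀ (g : G) (u v : V), Γ.Adj u v → ¬ (g • u = v ∧ g • v = u))) ∧
    (∀ (ι : Type) (H : Subgroup (FreeGroup ι)),
        ∃ κ : Type, Nonempty (H ≃* FreeGroup κ)) := by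
  constructor
  · constructor
    · rintro ⟨ι, ⟨e⟩⟩
      exact SerreAux.serre_forward e
    · rintro ⟨V, Γ, act, hT, hadj, hfree, hinv⟩
      exact SerreAux.serre_backward G V Γ hT hadj hfree hinv
  · intro ι H
    exact ⟨IsFreeGroup.Generators H, ⟨IsFreeGroup.toFreeGroup H⟩⟩
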